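/- Let m be a positive integer and x a real number. Then in ℝ[[z]] the exponential generating function of the modified bivariate geometric polynomials satisfies (m + x − x·e^{mz})^2 · ∑_{n≥0} ω̃_n(x,m) z^n/n! = m^2; equivalently ∑_{n≥0} ω̃_n(x,m) z^n/n! = m^2/(m + x − x e^{mz})^2. -/

import Mathlib

/-- Stirling numbers of the second kind:
`S(n,k) = (1/k!) ∑_{j=0}^k (−1)^{k−j} C(k,j) j^n`. -/
noncomputable def stirling2 (n k : ℕ) : ℝ :=
  (1 / (k.factorial : ℝ)) *
    ∑ j ∈ Finset.range (k + 1), (-1 : ℝ) ^ (k - j) * (k.choose j) * (j : ℝ) ^ n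

/-- Modified bivariate geometric polynomials
`ω̃_n(x,m) = ∑_{k=0}^n (k+1)!·S(n,k)·x^k·m^{n−k}`. -/
noncomputable def geomPolyMod (n : ℕ) (x : ℝ) (m : ℕ) : ℝ :=
  ∑ k ∈ Finset.range (n + 1), ((k + 1).factorial : ℝ) * stirling2 n k * x ^ k * (m : ℝ) ^ (n - k)

open PowerSeries Finset

private lemma coeff_rescale_exp (a : ℝ) (n : ℕ) :
    PowerSeries.coeff n (rescale a (exp ℝ)) = a ^ n / n.factorial := by
  rw [coeff_rescale, coeff_exp]
  simp [div_eq_mul_inv]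

private lemma coeff_pow_eq_zero' {f : ℝ⟦X⟧} (hf : PowerSeries.constantCoeff f = 0)
    {n k : ℕ} (h : n < k) : PowerSeries.coeff n (f ^ k) = 0 := by
  obtain ⟨g, rfl⟩ := PowerSeries.X_dvd_iff.2 hf
  rw [mul_pow, coeff_X_pow_mul', if_neg (by omega)]

private lemma geom_sq' {R : Type*} [CommRing R] (u : R) (N : ℕ) :
    (1 - u)^2 * ∑ k ∈ range (N+1), ((k+1 : ℕ) : R) * u^k
      = 1 - ((N+2 : ℕ) : R) * u^(N+1) + ((N+1 : ℕ) : R) * u^(N+2) := by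
  induction N with
  | zero => simp; ring
  | succ N ih =>
    rw [Finset.sum_range_succ, mul_add, ih]
    push_cast
    ring

private lemma coeff_E_pow (m : ℝ) (k n : ℕ) :
    PowerSeries.coeff n ((rescale m (exp ℝ) - 1) ^ k)
      = (∑ j ∈ range (k+1), (-1:ℝ)^(k-j) * (k.choose j) * ((j:ℝ)*m)^n) / n.factorial := by
  rw [sub_pow, map_sum, Finset.sum_div]
  refine Finset.sum_congr rfl fun j hj => ?_
  have hj' : j ≤ k := Nat.lt_succ_iff.mp (mem_range.mp hj)
  have h1 : (rescale m (exp ℝ))^j = rescale ((j:ℝ)*m) (exp ℝ) := by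
    rw [← map_pow, exp_pow_eq_rescale_exp, rescale_rescale]
  have hs : ((-1 : ℝ)) ^ (j + k) = (-1 : ℝ) ^ (k - j) := by
    rw [show j + k = (k - j) + 2 * j by omega, pow_add, pow_mul]
    simp
  have h2 : (-1 : ℝ⟦X⟧) ^ (j + k) * (rescale m (exp ℝ)) ^ j * 1 ^ (k - j) * ((k.choose j : ℕ) : ℝ⟦X⟧)
      = C ((-1:ℝ)^(k-j) * (k.choose j)) * rescale ((j:ℝ)*m) (exp ℝ) := by
    rw [h1, show (-1 : ℝ⟦X⟧) = C (-1) by simp, ← map_pow, ← map_natCast (C (R := ℝ)) (k.choose j),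
      map_mul, hs]
    ring
  rw [h2, coeff_C_mul, coeff_rescale_exp]
  ring

private lemma coeff_E_pow_stirling (m : ℝ) (k n : ℕ) :
    PowerSeries.coeff n ((rescale m (exp ℝ) - 1) ^ k)
      = k.factorial * stirling2 n k * m ^ n / n.factorial := by
  rw [coeff_E_pow, stirling2]
  have hS : ∑ j ∈ range (k+1), (-1:ℝ)^(k-j) * (k.choose j) * ((j:ℝ)*m)^n
      = (∑ j ∈ range (k+1), (-1:ℝ)^(k-j) * (k.choose j) * (j:ℝ)^n) * m^n := by
    rw [Finset.sum_mul]
    exact Finset.sum_congr rfl fun j _ => by rw [mul_pow]; ring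
  rw [hS]
  have hk : (k.factorial : ℝ) ≠ 0 := by exact_mod_cast k.factorial_ne_zero
  field_simp

/-- The EGF of the modified bivariate geometric polynomials satisfies
`(m + x − x·e^{mz})² · ∑_{n≥0} ω̃_n(x,m) z^n/n! = m²` in `ℝ[[z]]`;
equivalently `∑ ω̃_n(x,m) z^n/n! = m²/(m + x − x e^{mz})²`. -/
theorem geomPolyMod_egf (m : ℕ) (hm : 0 < m) (x : ℝ) :
    (PowerSeries.C ((m : ℝ) + x) -
        PowerSeries.C x * PowerSeries.rescale (m : ℝ) (PowerSeries.exp ℝ)) ^ 2 *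
      PowerSeries.mk (fun n => geomPolyMod n x m / n.factorial) =
      PowerSeries.C ((m : ℝ) ^ 2) := by
  have hm0 : (m : ℝ) ≠ 0 := Nat.cast_ne_zero.2 hm.ne'
  set u : ℝ⟦X⟧ := C (x / m) * (rescale (m:ℝ) (exp ℝ) - 1) with hu
  set F : ℝ⟦X⟧ := PowerSeries.mk (fun n => geomPolyMod n x m / n.factorial) with hF
  have hEc : constantCoeff (rescale (m:ℝ) (exp ℝ) - 1) = 0 := by
    rw [← coeff_zero_eq_constantCoeff_apply, map_sub, coeff_rescale_exp]
    simp
  have huc : constantCoeff u = 0 := by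
    rw [hu, map_mul, hEc, mul_zero]
  have hcoeffu : ∀ n k : ℕ, PowerSeries.coeff n (u ^ k)
      = (x/m)^k * (k.factorial * stirling2 n k * (m:ℝ)^n / n.factorial) := by
    intro n k
    rw [hu, mul_pow, ← map_pow, coeff_C_mul, coeff_E_pow_stirling, div_pow]
  -- coefficients of F agree with the truncated geometric series up to degree n
  have key : ∀ n j : ℕ, j ≤ n → PowerSeries.coeff j F
      = PowerSeries.coeff j (∑ k ∈ range (n+1), ((k+1:ℕ) : ℝ⟦X⟧) * u ^ k) := by
    intro n j hj
    rw [hF, coeff_mk, geomPolyMod, Finset.sum_div, map_sum]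
    rw [← Finset.sum_subset (Finset.range_subset_range.2 (by omega) : range (j+1) ⊆ range (n+1))
      (fun k _ hk => by
        rw [show ((k+1:ℕ) : ℝ⟦X⟧) = C ((k+1:ℕ):ℝ) from (map_natCast _ _).symm,
          coeff_C_mul, coeff_pow_eq_zero' huc (by simpa using hk), mul_zero])]
    refine Finset.sum_congr rfl fun k hk => ?_
    have hk' : k ≤ j := Nat.lt_succ_iff.mp (mem_range.mp hk)
    rw [show ((k+1:ℕ) : ℝ⟦X⟧) = C ((k+1:ℕ):ℝ) from (map_natCast _ _).symm,
      coeff_C_mul, hcoeffu]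
    have hmj : (m:ℝ)^j = (m:ℝ)^(j-k) * (m:ℝ)^k := by
      rw [← pow_add]; congr 1; omega
    rw [Nat.factorial_succ, hmj, div_pow]
    push_cast
    field_simp
  have hone : (1 - u)^2 * F = 1 := by
    ext n
    have h1 : PowerSeries.coeff n ((1 - u)^2 * F)
        = PowerSeries.coeff n ((1 - u)^2 * ∑ k ∈ range (n+1), ((k+1:ℕ) : ℝ⟦X⟧) * u ^ k) := by
      rw [coeff_mul, coeff_mul]
      refine Finset.sum_congr rfl fun p hp => ?_
      rw [key n p.2 (by have := Finset.HasAntidiagonal.mem_antidiagonal.mp hp; omega)]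
    rw [h1, geom_sq', map_add, map_sub]
    have hz1 : PowerSeries.coeff n (((n+2:ℕ):ℝ⟦X⟧) * u^(n+1)) = 0 := by
      rw [show ((n+2:ℕ) : ℝ⟦X⟧) = C ((n+2:ℕ):ℝ) from (map_natCast _ _).symm,
        coeff_C_mul, coeff_pow_eq_zero' huc (by omega), mul_zero]
    have hz2 : PowerSeries.coeff n (((n+1:ℕ):ℝ⟦X⟧) * u^(n+2)) = 0 := by
      rw [show ((n+1:ℕ) : ℝ⟦X⟧) = C ((n+1:ℕ):ℝ) from (map_natCast _ _).symm,
        coeff_C_mul, coeff_pow_eq_zero' huc (by omega), mul_zero]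
    rw [hz1, hz2]
    ring
  have hfac : C ((m : ℝ) + x) - C x * rescale (m:ℝ) (exp ℝ) = C (m:ℝ) * (1 - u) := by
    have h2 : C (m:ℝ) * C (x/m) = C x := by
      rw [← map_mul]; congr 1; field_simp
    rw [hu, map_add]
    linear_combination (rescale (m:ℝ) (exp ℝ) - 1) * h2
  rw [hfac, mul_pow, mul_assoc, hone, mul_one, ← map_pow]
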